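/- Let L ∈ ℕ and a = (a_0, …, a_L) ∈ ℝ^{L+1} with a_0 = −1, and let n > 0 and k > 0 be real numbers. Let I be a finite index set, let λ : I → ℝ satisfy, for each i, either λ_i = 0 or λ_i ∈ [n/k, n], and suppose S = #{i ∈ I : λ_i > 0} ≤ k. Let (N_i)_{i ∈ I} be independent random variables where N_i is Poisson with mean λ_i when λ_i > 0 and N_i = 0 almost surely when λ_i = 0, and let Ŝ = Σ_{i ∈ I} g_L(N_i). Then (1/k)·|E[Ŝ] − S| ≤ sup_{λ ∈ [n/k, n]} |e^{−λ} P_L(λ, a)| ≤ e^{−n/k}·sup_{λ ∈ [n/k, n]} |P_L(λ, a)|. -/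

import Mathlib

open Finset MeasureTheory ProbabilityTheory

/-- `P L a x = ∑_{l=0}^L a_l x^l`. -/
noncomputable def P (L : ℕ) (a : ℕ → ℝ) (x : ℝ) : ℝ :=
  ∑ l ∈ range (L + 1), a l * x ^ l

/-- The estimator function `g_L`: `g_L(j) = a_j·j! + 1` for `j ≤ L`, and `g_L(j) = 1`
for `j > L`. -/
noncomputable def gL (L : ℕ) (a : ℕ → ℝ) (j : ℕ) : ℝ :=
  if j ≤ L then a j * (j.factorial : ℝ) + 1 else 1

lemma gL_abs_le (L : ℕ) (a : ℕ → ℝ) (j : ℕ) :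
    |gL L a j| ≤ 1 + ∑ l ∈ range (L + 1), |a l * (l.factorial : ℝ)| := by
  have hsum : (0:ℝ) ≤ ∑ l ∈ range (L + 1), |a l * (l.factorial : ℝ)| :=
    Finset.sum_nonneg fun l _ => abs_nonneg _
  unfold gL
  split_ifs with h
  · have hmem : j ∈ range (L + 1) := Finset.mem_range.mpr (by omega)
    have : |a j * (j.factorial : ℝ)| ≤ ∑ l ∈ range (L + 1), |a l * (l.factorial : ℝ)| :=
      Finset.single_le_sum (f := fun l => |a l * (l.factorial : ℝ)|) (fun l _ => abs_nonneg _) hmem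
    calc |a j * (j.factorial : ℝ) + 1| ≤ |a j * (j.factorial : ℝ)| + |1| := abs_add_le _ _
      _ ≤ (∑ l ∈ range (L + 1), |a l * (l.factorial : ℝ)|) + 1 := by
          simpa using add_le_add_right this 1
      _ = 1 + ∑ l ∈ range (L + 1), |a l * (l.factorial : ℝ)| := by ring
  · rw [abs_one]; linarith

lemma integral_gL_poisson (L : ℕ) (a : ℕ → ℝ) (r : NNReal) :
    ∫ j, gL L a j ∂(poissonMeasure r) = 1 + Real.exp (-(r:ℝ)) * P L a (r:ℝ) := by
  have hintg : Integrable (gL L a) (poissonMeasure r) := by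
    refine (integrable_const (1 + ∑ l ∈ range (L + 1), |a l * (l.factorial : ℝ)|)).mono'
      measurable_from_top.aestronglyMeasurable (ae_of_all _ fun j => ?_)
    simpa using gL_abs_le L a j
  rw [integral_poissonMeasure]
  have key : ∀ j : ℕ, (Real.exp (-(r:ℝ)) * (r:ℝ) ^ j / (j.factorial : ℝ)) • gL L a j
      = Real.exp (-(r:ℝ)) * (r:ℝ) ^ j / (j.factorial : ℝ) * (if j ≤ L then a j * (j.factorial : ℝ) else 0)
        + Real.exp (-(r:ℝ)) * (r:ℝ) ^ j / (j.factorial : ℝ) := by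
    intro j
    rw [smul_eq_mul]
    unfold gL
    split_ifs <;> ring
  simp_rw [key]
  have hzero : ∀ j ∉ range (L + 1),
      Real.exp (-(r:ℝ)) * (r:ℝ) ^ j / (j.factorial : ℝ) * (if j ≤ L then a j * (j.factorial : ℝ) else 0) = 0 := by
    intro j hj
    rw [if_neg (by simpa using Finset.mem_range.not.mp hj), mul_zero]
  have hs1 : Summable (fun j => Real.exp (-(r:ℝ)) * (r:ℝ) ^ j / (j.factorial : ℝ) *
      (if j ≤ L then a j * (j.factorial : ℝ) else 0)) :=
    summable_of_ne_finset_zero hzero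
  have hs2 : Summable (fun j => Real.exp (-(r:ℝ)) * (r:ℝ) ^ j / (j.factorial : ℝ)) :=
    (hasSum_one_poissonMeasure r).summable
  rw [Summable.tsum_add hs1 hs2, (hasSum_one_poissonMeasure r).tsum_eq, tsum_eq_sum hzero]
  have : ∑ j ∈ range (L + 1), Real.exp (-(r:ℝ)) * (r:ℝ) ^ j / (j.factorial : ℝ) *
      (if j ≤ L then a j * (j.factorial : ℝ) else 0) = Real.exp (-(r:ℝ)) * P L a r := by
    rw [P, Finset.mul_sum]
    refine Finset.sum_congr rfl fun j hj => ?_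
    have hjL : j ≤ L := by have := Finset.mem_range.mp hj; omega
    rw [if_pos hjL]
    have hfac : (j.factorial : ℝ) ≠ 0 := Nat.cast_ne_zero.mpr j.factorial_ne_zero
    field_simp
  rw [this]
  ring

open Classical in
theorem stmt_17 {Ω : Type*} [MeasurableSpace Ω] (μ : Measure Ω) [IsProbabilityMeasure μ]
    {I : Type*} [Fintype I] (L : ℕ) (a : ℕ → ℝ) (ha0 : a 0 = -1)
    (n k : ℝ) (hn : 0 < n) (hk : 0 < k)
    (lam : I → ℝ) (hlam : ∀ i, lam i = 0 ∨ lam i ∈ Set.Icc (n / k) n)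
    (hS : ((Finset.univ.filter fun i : I => 0 < lam i).card : ℝ) ≤ k)
    (N : I → Ω → ℕ) (hmeas : ∀ i, Measurable (N i))
    (hindep : iIndepFun N μ)
    (hpois : ∀ i, 0 < lam i → μ.map (N i) = poissonMeasure (lam i).toNNReal)
    (hzero : ∀ i, lam i = 0 → ∀ᵐ ω ∂μ, N i ω = 0) :
    (1 / k) * |(∫ ω, (∑ i : I, gL L a (N i ω)) ∂μ) -
        ((Finset.univ.filter fun i : I => 0 < lam i).card : ℝ)|
      ≤ sSup ((fun x : ℝ => |Real.exp (-x) * P L a x|) '' Set.Icc (n / k) n) ∧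
    sSup ((fun x : ℝ => |Real.exp (-x) * P L a x|) '' Set.Icc (n / k) n)
      ≤ Real.exp (-(n / k)) *
          sSup ((fun x : ℝ => |P L a x|) '' Set.Icc (n / k) n) := by
  set pos := Finset.univ.filter fun i : I => 0 < lam i with hposdef
  set Mset := (fun x : ℝ => |Real.exp (-x) * P L a x|) '' Set.Icc (n / k) n with hMset
  set M := sSup Mset with hM
  have hPcont : Continuous fun x : ℝ => P L a x := by
    unfold P
    exact continuous_finset_sum _ fun l _ => (continuous_const.mul (continuous_pow l))
  have hcont : Continuous fun x : ℝ => |Real.exp (-x) * P L a x| :=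
    ((Real.continuous_exp.comp continuous_neg).mul hPcont).abs
  have hbdd : BddAbove Mset := (isCompact_Icc.image hcont).bddAbove
  have hM0 : 0 ≤ M := by
    rcases Set.eq_empty_or_nonempty Mset with h | h
    · simp [hM, h, Real.sSup_empty]
    · obtain ⟨y, x, hx, rfl⟩ := h
      exact le_trans (abs_nonneg _) (le_csSup hbdd ⟨x, hx, rfl⟩)
  -- integrability
  set C := 1 + ∑ l ∈ range (L + 1), |a l * (l.factorial : ℝ)| with hC
  have hint : ∀ i, Integrable (fun ω => gL L a (N i ω)) μ := fun i =>
    (integrable_const C).mono' ((measurable_from_top : Measurable (gL L a)).comp (hmeas i)).aestronglyMeasurable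
      (ae_of_all _ fun ω => by simpa [hC] using gL_abs_le L a (N i ω))
  -- value of each integral
  have hcomp : ∀ i ∈ pos, ∫ ω, gL L a (N i ω) ∂μ
      = 1 + Real.exp (-(lam i)) * P L a (lam i) := by
    intro i hi
    have hli : 0 < lam i := (Finset.mem_filter.mp hi).2
    have h1 : ∫ ω, gL L a (N i ω) ∂μ = ∫ j, gL L a j ∂(μ.map (N i)) :=
      (integral_map (hmeas i).aemeasurable measurable_from_top.aestronglyMeasurable).symm
    have hcoe : (((lam i).toNNReal : ℝ)) = lam i := Real.coe_toNNReal _ hli.le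
    rw [h1, hpois i hli, integral_gL_poisson, hcoe]
  have hzint : ∀ i ∈ Finset.univ, i ∉ pos → ∫ ω, gL L a (N i ω) ∂μ = 0 := by
    intro i _ hi
    have hnpos : ¬ 0 < lam i := fun h => hi (Finset.mem_filter.mpr ⟨Finset.mem_univ i, h⟩)
    have hli : lam i = 0 := by
      rcases hlam i with h | h
      · exact h
      · exact absurd (lt_of_lt_of_le (div_pos hn hk) h.1) hnpos
    have hae : (fun ω => gL L a (N i ω)) =ᵐ[μ] fun _ => 0 := by
      filter_upwards [hzero i hli] with ω hω
      simp [hω, gL, ha0]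
    rw [integral_congr_ae hae, integral_zero]
  have hE : (∫ ω, (∑ i : I, gL L a (N i ω)) ∂μ) = ∑ i : I, ∫ ω, gL L a (N i ω) ∂μ :=
    integral_finset_sum _ fun i _ => hint i
  have hsum : ∑ i : I, ∫ ω, gL L a (N i ω) ∂μ
      = (pos.card : ℝ) + ∑ i ∈ pos, Real.exp (-(lam i)) * P L a (lam i) := by
    rw [← Finset.sum_subset (Finset.subset_univ pos) hzint, Finset.sum_congr rfl hcomp,
      Finset.sum_add_distrib, Finset.sum_const, nsmul_eq_mul, mul_one]
  have hdiff : (∫ ω, (∑ i : I, gL L a (N i ω)) ∂μ) - (pos.card : ℝ)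
      = ∑ i ∈ pos, Real.exp (-(lam i)) * P L a (lam i) := by
    rw [hE, hsum]; ring
  have hmemM : ∀ i ∈ pos, |Real.exp (-(lam i)) * P L a (lam i)| ≤ M := by
    intro i hi
    have hli : 0 < lam i := (Finset.mem_filter.mp hi).2
    have hicc : lam i ∈ Set.Icc (n / k) n := by
      rcases hlam i with h | h
      · exact absurd h hli.ne'
      · exact h
    exact le_csSup hbdd ⟨lam i, hicc, rfl⟩
  have hbound : |(∫ ω, (∑ i : I, gL L a (N i ω)) ∂μ) - (pos.card : ℝ)| ≤ k * M := by
    rw [hdiff]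
    calc |∑ i ∈ pos, Real.exp (-(lam i)) * P L a (lam i)|
        ≤ ∑ i ∈ pos, |Real.exp (-(lam i)) * P L a (lam i)| := Finset.abs_sum_le_sum_abs _ _
      _ ≤ ∑ _i ∈ pos, M := Finset.sum_le_sum hmemM
      _ = (pos.card : ℝ) * M := by rw [Finset.sum_const, nsmul_eq_mul]
      _ ≤ k * M := mul_le_mul_of_nonneg_right hS hM0
  constructor
  · rw [one_div, inv_mul_le_iff₀ hk]
    exact hbound
  · -- second inequality
    set M'set := (fun x : ℝ => |P L a x|) '' Set.Icc (n / k) n with hM'set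
    have hbdd' : BddAbove M'set := (isCompact_Icc.image hPcont.abs).bddAbove
    have hM'0 : 0 ≤ sSup M'set := by
      rcases Set.eq_empty_or_nonempty M'set with h | h
      · simp [hM'set] at h
        simp [hM'set, h, Real.sSup_empty]
      · obtain ⟨y, x, hx, rfl⟩ := h
        exact le_trans (abs_nonneg _) (le_csSup hbdd' ⟨x, hx, rfl⟩)
    refine Real.sSup_le ?_ (mul_nonneg (Real.exp_pos _).le hM'0)
    rintro y ⟨x, hx, rfl⟩
    show |Real.exp (-x) * P L a x| ≤ _
    rw [abs_mul, abs_of_pos (Real.exp_pos _)]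
    calc Real.exp (-x) * |P L a x| ≤ Real.exp (-(n / k)) * |P L a x| :=
          mul_le_mul_of_nonneg_right (Real.exp_le_exp.mpr (neg_le_neg hx.1)) (abs_nonneg _)
      _ ≤ Real.exp (-(n / k)) * sSup M'set :=
          mul_le_mul_of_nonneg_left (le_csSup hbdd' ⟨x, hx, rfl⟩) (Real.exp_pos _).le
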